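/- Let F : ℝᵐ → ℝ be differentiable with gradient bounded by ρ (‖∇F(x)‖ ≤ ρ for all x) and L-Lipschitz smooth (‖∇F(x) − ∇F(y)‖ ≤ L‖x − y‖ for all x, y). Let W : ℝᵏ → ℝ be twice differentiable with ‖∇W(ν)‖ ≤ δ and operator norm of the Hessian ‖∇²W(ν)‖ ≤ B for all ν. Fix ψ₀ ∈ ℝᵐ, u ∈ ℝᵐ with ‖u‖ ≤ ρ, and 0 < β ≤ 1, and define G(ν) = F(ψ₀ − β·W(ν)·u). Then G is ρ²(Lδ² + B)-Lipschitz smooth: ‖∇G(ν₁) − ∇G(ν₂)‖ ≤ ρ²(Lδ² + B)·‖ν₁ − ν₂‖ for all ν₁, ν₂ ∈ ℝᵏ. (Lemma A.3: the outer loss L_RVL is ρ²(Lδ² + B)-Lipschitz smooth with respect to the weighting-network parameters ν.) -/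

import Mathlib

open InnerProductSpace

/-- Lemma A.3: if `F` has gradient bounded by `ρ` and is `L`-Lipschitz smooth, `W` is twice
differentiable with `‖∇W‖ ≤ δ` and Hessian operator norm bounded by `B`, `‖u‖ ≤ ρ`, and
`0 < β ≤ 1`, then `G(ν) = F(ψ₀ − β·W(ν)·u)` is `ρ²(Lδ² + B)`-Lipschitz smooth. -/
theorem composite_lipschitz_smooth {m k : ℕ}
    (F : EuclideanSpace ℝ (Fin m) → ℝ) (hF : Differentiable ℝ F)
    (ρ L : ℝ) (hL : 0 ≤ L)
    (hFgrad : ∀ x, ‖gradient F x‖ ≤ ρ)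
    (hFsmooth : ∀ x y, ‖gradient F x - gradient F y‖ ≤ L * ‖x - y‖)
    (W : EuclideanSpace ℝ (Fin k) → ℝ)
    (hW : Differentiable ℝ W) (hW2 : Differentiable ℝ (gradient W))
    (δ B : ℝ)
    (hWgrad : ∀ ν, ‖gradient W ν‖ ≤ δ)
    (hWhess : ∀ ν, ‖fderiv ℝ (gradient W) ν‖ ≤ B)
    (ψ₀ u : EuclideanSpace ℝ (Fin m)) (hu : ‖u‖ ≤ ρ)
    (β : ℝ) (hβ0 : 0 < β) (hβ1 : β ≤ 1) :
    ∀ ν₁ ν₂ : EuclideanSpace ℝ (Fin k),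
      ‖gradient (fun ν => F (ψ₀ - (β * W ν) • u)) ν₁ -
          gradient (fun ν => F (ψ₀ - (β * W ν) • u)) ν₂‖ ≤
        ρ ^ 2 * (L * δ ^ 2 + B) * ‖ν₁ - ν₂‖ := by
  intro ν₁ ν₂
  set φ : EuclideanSpace ℝ (Fin k) → EuclideanSpace ℝ (Fin m) :=
    fun ν => ψ₀ - (β * W ν) • u with hφ
  set c : EuclideanSpace ℝ (Fin k) → ℝ :=
    fun ν => -(β * inner ℝ (gradient F (φ ν)) u) with hc
  -- compute the gradient
  have hgrad : ∀ ν, gradient (fun ν => F (ψ₀ - (β * W ν) • u)) ν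
      = c ν • gradient W ν := by
    intro ν
    have hWg : HasGradientAt W (gradient W ν) ν := (hW ν).hasGradientAt
    have hWf : HasFDerivAt W (toDual ℝ _ (gradient W ν)) ν :=
      (hasGradientAt_iff_hasFDerivAt.mp hWg)
    have hφ' : HasFDerivAt φ
        ((-(β • (toDual ℝ _ (gradient W ν)))).smulRight u) ν := by
      have h1 : HasFDerivAt (fun ν => (β * W ν) • u)
          ((β • (toDual ℝ _ (gradient W ν))).smulRight u) ν := by
        exact (hWf.const_mul β).smul_const u
      have := h1.const_sub ψ₀
      refine this.congr_fderiv ?_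
      ext h
      simp
    have hFf : HasFDerivAt F (toDual ℝ _ (gradient F (φ ν))) (φ ν) :=
      (hasGradientAt_iff_hasFDerivAt.mp ((hF (φ ν)).hasGradientAt))
    have hcomp := hFf.comp ν hφ'
    have key : ((toDual ℝ _ (gradient F (φ ν))).comp
        ((-(β • (toDual ℝ _ (gradient W ν)))).smulRight u))
        = toDual ℝ _ (c ν • gradient W ν) := by
      ext h
      simp only [hc, ContinuousLinearMap.coe_comp', Function.comp_apply,
        ContinuousLinearMap.smulRight_apply, ContinuousLinearMap.neg_apply,
        ContinuousLinearMap.smul_apply, InnerProductSpace.toDual_apply_apply,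
        real_inner_smul_left, real_inner_smul_right, smul_eq_mul, neg_smul,
        inner_neg_left, inner_neg_right, neg_mul, mul_neg, neg_neg]
      ring
    rw [key] at hcomp
    exact (hasGradientAt_iff_hasFDerivAt.mpr hcomp).gradient
  rw [hgrad ν₁, hgrad ν₂]
  have hρ0 : 0 ≤ ρ := le_trans (norm_nonneg u) hu
  have hδ0 : 0 ≤ δ := le_trans (norm_nonneg _) (hWgrad ν₁)
  have hB0 : 0 ≤ B := le_trans (norm_nonneg _) (hWhess ν₁)
  have hnormg : ∀ ν, ‖fderiv ℝ W ν‖ = ‖gradient W ν‖ := by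
    intro ν
    rw [gradient]
    exact ((toDual ℝ (EuclideanSpace ℝ (Fin k))).symm.norm_map _).symm
  -- W is δ-Lipschitz
  have hWlip : ∀ ν₁ ν₂ : EuclideanSpace ℝ (Fin k), ‖W ν₁ - W ν₂‖ ≤ δ * ‖ν₁ - ν₂‖ := by
    intro a b
    exact (convex_univ).norm_image_sub_le_of_norm_fderiv_le
      (fun x _ => hW x) (fun x _ => (hnormg x ▸ hWgrad x)) trivial trivial
  -- gradient W is B-Lipschitz
  have hWglip : ‖gradient W ν₁ - gradient W ν₂‖ ≤ B * ‖ν₁ - ν₂‖ :=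
    (convex_univ).norm_image_sub_le_of_norm_fderiv_le
      (fun x _ => hW2 x) (fun x _ => hWhess x) trivial trivial
  -- bound on |c|
  have hcbound : ∀ ν, |c ν| ≤ ρ ^ 2 := by
    intro ν
    have h1 : |inner ℝ (gradient F (φ ν)) u| ≤ ρ * ρ := by
      calc |(inner ℝ (gradient F (φ ν)) u : ℝ)| ≤ ‖gradient F (φ ν)‖ * ‖u‖ :=
            abs_real_inner_le_norm _ _
        _ ≤ ρ * ρ := mul_le_mul (hFgrad _) hu (norm_nonneg _) hρ0
    calc |c ν| = β * |inner ℝ (gradient F (φ ν)) u| := by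
          rw [hc]; rw [abs_neg, abs_mul, abs_of_pos hβ0]
      _ ≤ 1 * (ρ * ρ) := mul_le_mul hβ1 h1 (abs_nonneg _) zero_le_one
      _ = ρ ^ 2 := by ring
  -- bound on |c ν₁ - c ν₂|
  have hφdiff : ‖φ ν₁ - φ ν₂‖ ≤ β * (δ * ρ) * ‖ν₁ - ν₂‖ := by
    have : φ ν₁ - φ ν₂ = (β * W ν₂ - β * W ν₁) • u := by
      simp only [hφ]
      rw [sub_sub_sub_cancel_left, ← sub_smul]
    rw [this, norm_smul]
    have h2 : ‖β * W ν₂ - β * W ν₁‖ ≤ β * (δ * ‖ν₁ - ν₂‖) := by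
      rw [← mul_sub, norm_mul, Real.norm_eq_abs, abs_of_pos hβ0]
      refine mul_le_mul_of_nonneg_left ?_ hβ0.le
      rw [norm_sub_rev]
      exact hWlip ν₁ ν₂
    calc ‖β * W ν₂ - β * W ν₁‖ * ‖u‖ ≤ (β * (δ * ‖ν₁ - ν₂‖)) * ρ :=
          mul_le_mul h2 hu (norm_nonneg _) (by positivity)
      _ = β * (δ * ρ) * ‖ν₁ - ν₂‖ := by ring
  have hcdiff : |c ν₁ - c ν₂| ≤ L * ρ ^ 2 * δ * ‖ν₁ - ν₂‖ := by
    have heq : c ν₁ - c ν₂ = -(β * inner ℝ (gradient F (φ ν₁) - gradient F (φ ν₂)) u) := by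
      rw [hc]; rw [inner_sub_left]; ring
    rw [heq, abs_neg, abs_mul, abs_of_pos hβ0]
    have h1 : |(inner ℝ (gradient F (φ ν₁) - gradient F (φ ν₂)) u : ℝ)|
        ≤ (L * (β * (δ * ρ) * ‖ν₁ - ν₂‖)) * ρ := by
      calc |(inner ℝ (gradient F (φ ν₁) - gradient F (φ ν₂)) u : ℝ)|
          ≤ ‖gradient F (φ ν₁) - gradient F (φ ν₂)‖ * ‖u‖ := abs_real_inner_le_norm _ _
        _ ≤ (L * ‖φ ν₁ - φ ν₂‖) * ρ :=
            mul_le_mul (hFsmooth _ _) hu (norm_nonneg _)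
              (mul_nonneg hL (norm_nonneg _))
        _ ≤ (L * (β * (δ * ρ) * ‖ν₁ - ν₂‖)) * ρ := by
            refine mul_le_mul_of_nonneg_right (mul_le_mul_of_nonneg_left hφdiff hL) hρ0
    calc β * |(inner ℝ (gradient F (φ ν₁) - gradient F (φ ν₂)) u : ℝ)|
        ≤ 1 * ((L * (1 * (δ * ρ) * ‖ν₁ - ν₂‖)) * ρ) := by
          refine mul_le_mul hβ1 (h1.trans ?_) (abs_nonneg _) zero_le_one
          have : β * (δ * ρ) ≤ 1 * (δ * ρ) :=
            mul_le_mul_of_nonneg_right hβ1 (by positivity)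
          nlinarith [norm_nonneg (ν₁ - ν₂), mul_le_mul_of_nonneg_right
            (mul_le_mul_of_nonneg_right this (norm_nonneg (ν₁ - ν₂))) hρ0,
            mul_nonneg hL (norm_nonneg (ν₁ - ν₂))]
      _ = L * ρ ^ 2 * δ * ‖ν₁ - ν₂‖ := by ring
  -- combine
  have hsplit : c ν₁ • gradient W ν₁ - c ν₂ • gradient W ν₂
      = (c ν₁ - c ν₂) • gradient W ν₁ + c ν₂ • (gradient W ν₁ - gradient W ν₂) := by
    rw [sub_smul, smul_sub]; abel
  rw [hsplit]
  calc ‖(c ν₁ - c ν₂) • gradient W ν₁ + c ν₂ • (gradient W ν₁ - gradient W ν₂)‖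
      ≤ ‖(c ν₁ - c ν₂) • gradient W ν₁‖ + ‖c ν₂ • (gradient W ν₁ - gradient W ν₂)‖ :=
        norm_add_le _ _
    _ ≤ (L * ρ ^ 2 * δ * ‖ν₁ - ν₂‖) * δ + ρ ^ 2 * (B * ‖ν₁ - ν₂‖) := by
        refine add_le_add ?_ ?_
        · rw [norm_smul, Real.norm_eq_abs]
          exact mul_le_mul hcdiff (hWgrad ν₁) (norm_nonneg _) (by positivity)
        · rw [norm_smul, Real.norm_eq_abs]
          exact mul_le_mul (hcbound ν₂) hWglip (norm_nonneg _) (by positivity)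
    _ = ρ ^ 2 * (L * δ ^ 2 + B) * ‖ν₁ - ν₂‖ := by ring
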